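/- Let E be a real locally convex topological vector space with dual E*, and T : E ⇉ E*. Then T is monotone if and only if for every x* ∈ E* and every finite subset {(x_1,x_1*),…,(x_m,x_m*)} of the graph of T, there exists x̄ in the convex hull of {x_1,…,x_m} such that ⟨x_i* − x*, x_i − x̄⟩ ≥ 0 for every i. -/

import Mathlib

/-- `T` is monotone iff for every `x* ∈ E*` and every finite subset
`{(xᵢ, xᵢ*)}` of the graph of `T`, there is `xb` in the convex hull of the `xᵢ`
with `⟨xᵢ* - x*, xᵢ - xb⟩ ≥ 0` for all `i`. -/
theorem monotone_iff_finite_minty {E : Type*} [AddCommGroup E] [Module ℝ E]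
    [TopologicalSpace E] [IsTopologicalAddGroup E] [ContinuousSMul ℝ E]
    [LocallyConvexSpace ℝ E] [T2Space E]
    (T : E → Set (E →L[ℝ] ℝ)) :
    (∀ x y (x' y' : E →L[ℝ] ℝ), x' ∈ T x → y' ∈ T y → 0 ≤ (y' - x') (y - x)) ↔
    (∀ z : E →L[ℝ] ℝ, ∀ (m : ℕ), 0 < m → ∀ (x : Fin m → E) (x' : Fin m → E →L[ℝ] ℝ),
      (∀ i, x' i ∈ T (x i)) →
      ∃ xb ∈ convexHull ℝ (Set.range x), ∀ i, 0 ≤ (x' i - z) (x i - xb)) := by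
  constructor
  · -- monotone ⟹ finite Minty property
    intro hmono z m hm x x' hx
    by_contra hcon
    push_neg at hcon
    -- the matrix of the "game"
    set A : Matrix (Fin m) (Fin m) ℝ := fun i j => (x' i - z) (x i - x j) with hAdef
    set L : (Fin m → ℝ) →ₗ[ℝ] (Fin m → ℝ) := A.mulVecLin with hLdef
    -- key computation relating `A.mulVec` with the pairing against a convex combination
    have hkey : ∀ l ∈ stdSimplex ℝ (Fin m), ∀ i,
        L l i = (x' i - z) (x i - ∑ j, l j • x j) := by
      intro l hl i
      have hsum : ∑ j, l j = 1 := hl.2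
      have hR : (x' i - z) (x i - ∑ j, l j • x j)
          = (x' i - z) (x i) - ∑ j, (x' i - z) (x j) * l j := by
        rw [map_sub, map_sum]
        congr 1
        exact Finset.sum_congr rfl fun j _ => by rw [map_smul, smul_eq_mul, mul_comm]
      rw [hR]
      simp only [hLdef, Matrix.mulVecLin_apply, Matrix.mulVec, dotProduct, hAdef]
      calc ∑ j, ((x' i - z) (x i - x j)) * l j
          = ∑ j, ((x' i - z) (x i) * l j - (x' i - z) (x j) * l j) := by
            refine Finset.sum_congr rfl fun j _ => ?_
            rw [map_sub]; ring
        _ = (x' i - z) (x i) * (∑ j, l j) - ∑ j, (x' i - z) (x j) * l j := by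
            rw [Finset.sum_sub_distrib, Finset.mul_sum]
        _ = (x' i - z) (x i) - ∑ j, (x' i - z) (x j) * l j := by rw [hsum, mul_one]
    -- the two convex sets
    set P : Set (Fin m → ℝ) := Set.univ.pi fun _ : Fin m => Set.Ici (0:ℝ) with hPdef
    have hdisj : Disjoint (L '' stdSimplex ℝ (Fin m)) P := by
      rw [Set.disjoint_left]
      rintro y ⟨l, hl, rfl⟩ hy
      have hxb : (∑ j, l j • x j) ∈ convexHull ℝ (Set.range x) := by
        have h1 : Finset.univ.centerMass l x ∈ convexHull ℝ (Set.range x) :=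
          Finset.centerMass_mem_convexHull _ (fun i _ => hl.1 i) (by rw [hl.2]; norm_num)
            (fun i _ => Set.mem_range_self i)
        rwa [Finset.centerMass_eq_of_sum_1 _ _ hl.2] at h1
      obtain ⟨i, hi⟩ := hcon _ hxb
      have h0 : (0:ℝ) ≤ L l i := hy i (Set.mem_univ i)
      rw [hkey l hl i] at h0
      linarith
    obtain ⟨f, u, v, hfu, huv, hfv⟩ :=
      geometric_hahn_banach_compact_closed
        ((convex_stdSimplex ℝ (Fin m)).linear_image L)
        ((isCompact_stdSimplex _ _).image L.continuous_of_finiteDimensional)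
        (convex_pi fun i _ => convex_Ici (0:ℝ))
        (isClosed_set_pi fun i _ => isClosed_Ici)
        hdisj
    set μ : Fin m → ℝ := fun i => f (fun j => if i = j then 1 else 0) with hμdef
    have hfy : ∀ y : Fin m → ℝ, f y = ∑ i, y i * μ i := by
      intro y
      have h1 := (f : (Fin m → ℝ) →ₗ[ℝ] ℝ).pi_apply_eq_sum_univ y
      simpa [smul_eq_mul] using h1
    have hv0 : v < 0 := by
      have h0 : (0 : Fin m → ℝ) ∈ P := by intro i _; simp
      have := hfv 0 h0
      rwa [map_zero] at this
    have hμ0 : ∀ i, 0 ≤ μ i := by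
      intro i
      by_contra hneg
      push_neg at hneg
      set t : ℝ := (v - 1) / μ i with htdef
      have ht : 0 < t := div_pos_of_neg_of_neg (by linarith) hneg
      have hmem : (t • fun j => if i = j then (1:ℝ) else 0) ∈ P := by
        intro j _
        simp only [Pi.smul_apply, smul_eq_mul, Set.mem_Ici]
        split_ifs
        · linarith
        · simp
      have h1 : v < t * μ i := by
        have hh := hfv _ hmem
        rwa [map_smul, smul_eq_mul] at hh
      have h2 : t * μ i = v - 1 := div_mul_cancel₀ _ hneg.ne
      rw [h2] at h1
      linarith
    have hμpos : ∃ i, 0 < μ i := by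
      by_contra hall
      push_neg at hall
      have hz : ∀ i, μ i = 0 := fun i => le_antisymm (hall i) (hμ0 i)
      have hl0 : (fun j => if (⟨0, hm⟩ : Fin m) = j then (1:ℝ) else 0)
          ∈ stdSimplex ℝ (Fin m) := by
        constructor
        · intro j; by_cases hj : (⟨0, hm⟩ : Fin m) = j <;> simp [hj]
        · simp
      have := hfu _ ⟨_, hl0, rfl⟩
      rw [hfy] at this
      simp only [hz, mul_zero, Finset.sum_const_zero] at this
      linarith
    obtain ⟨i₀, hi₀⟩ := hμpos
    set s : ℝ := ∑ i, μ i with hsdef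
    have hs : 0 < s :=
      Finset.sum_pos' (fun i _ => hμ0 i) ⟨i₀, Finset.mem_univ i₀, hi₀⟩
    set lam : Fin m → ℝ := fun i => μ i / s with hlamdef
    have hlam : lam ∈ stdSimplex ℝ (Fin m) := by
      constructor
      · intro i; exact div_nonneg (hμ0 i) hs.le
      · rw [← Finset.sum_div]; exact div_self hs.ne'
    -- the quadratic form is nonnegative by monotonicity
    have hquad : 0 ≤ ∑ i, ∑ j, μ i * μ j * A i j := by
      have hterm : ∀ i j, 0 ≤ μ i * μ j * (A i j + A j i) := by
        intro i j
        have hmon := hmono (x j) (x i) (x' j) (x' i) (hx j) (hx i)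
        have heq : A i j + A j i = (x' i - x' j) (x i - x j) := by
          simp only [hAdef, ContinuousLinearMap.sub_apply, map_sub]
          ring
        rw [heq]
        exact mul_nonneg (mul_nonneg (hμ0 i) (hμ0 j)) hmon
      have hpos : 0 ≤ ∑ i, ∑ j, μ i * μ j * (A i j + A j i) :=
        Finset.sum_nonneg fun i _ => Finset.sum_nonneg fun j _ => hterm i j
      have hsw : ∑ i, ∑ j, μ i * μ j * A j i = ∑ i, ∑ j, μ i * μ j * A i j := by
        rw [Finset.sum_comm]
        exact Finset.sum_congr rfl fun i _ => Finset.sum_congr rfl fun j _ => by ring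
      have h2 : ∑ i, ∑ j, μ i * μ j * (A i j + A j i)
          = (∑ i, ∑ j, μ i * μ j * A i j) * 2 := by
        simp only [mul_add, Finset.sum_add_distrib]
        rw [hsw]; ring
      rw [h2] at hpos
      linarith
    -- evaluate `f` at the image of `lam`
    have hval : f (L lam) = s⁻¹ * ∑ i, ∑ j, μ i * μ j * A i j := by
      rw [hfy, Finset.mul_sum]
      refine Finset.sum_congr rfl fun i _ => ?_
      simp only [hLdef, Matrix.mulVecLin_apply, Matrix.mulVec, dotProduct, hlamdef]
      rw [Finset.sum_mul, Finset.mul_sum]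
      refine Finset.sum_congr rfl fun j _ => ?_
      field_simp
    have hlt := hfu _ ⟨lam, hlam, rfl⟩
    have hge : 0 ≤ f (L lam) := by
      rw [hval]
      exact mul_nonneg (inv_nonneg.mpr hs.le) hquad
    linarith
  · -- finite Minty ⟹ monotone
    intro h x y x' y' hxT hyT
    obtain ⟨xb, hxb, hineq⟩ := h ((2⁻¹ : ℝ) • (x' + y')) 2 (by norm_num) ![x, y] ![x', y']
      (by intro i; fin_cases i <;> simpa)
    have hrange : Set.range ![x, y] = {x, y} := by
      ext w
      simp only [Set.mem_insert_iff, Set.mem_singleton_iff]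
      constructor
      · rintro ⟨i, rfl⟩
        fin_cases i <;> simp
      · rintro (rfl | rfl)
        · exact ⟨0, rfl⟩
        · exact ⟨1, rfl⟩
    rw [hrange, convexHull_pair] at hxb
    obtain ⟨a, b, ha, hb, hab, rfl⟩ := hxb
    have hb' : b = 1 - a := by linarith
    subst hb'
    have h0 := hineq 0
    have h1 := hineq 1
    simp only [Matrix.cons_val_zero, Matrix.cons_val_one, Matrix.head_cons] at h0 h1
    have key : (y' - x') (y - x)
        = 2 * ((![x', y'] 0 - (2⁻¹ : ℝ) • (x' + y')) (![x, y] 0 - (a • x + (1 - a) • y)))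
        + 2 * ((![x', y'] 1 - (2⁻¹ : ℝ) • (x' + y')) (![x, y] 1 - (a • x + (1 - a) • y))) := by
      simp only [Matrix.cons_val_zero, Matrix.cons_val_one, Matrix.head_cons,
        ContinuousLinearMap.sub_apply, ContinuousLinearMap.smul_apply,
        ContinuousLinearMap.add_apply, map_sub, map_add, map_smul, smul_eq_mul]
      ring
    rw [key]
    have h0' := hineq 0
    have h1' := hineq 1
    linarith
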